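/- arXiv:1802.04166 — 2 statements merged into one kernel-verified Lean document; each statement's English description precedes it below -/
import Mathlib

section
/- A countable graph Γ is MB-homogeneous if and only if Γ has the mono-extension property (MEP) and the antimono-extension property (AMEP). -/
/-- MB-homogeneity: every monomorphism between finite induced subgraphs of `Γ`
extends to a bijective endomorphism of `Γ`. -/
def MBHomogeneous {V : Type*} (Γ : SimpleGraph V) : Prop :=
  ∀ (A : Finset V) (f : V → V), Set.InjOn f A →
    (∀ u ∈ A, ∀ v ∈ A, Γ.Adj u v → Γ.Adj (f u) (f v)) →
    ∃ g : V ≃ V, (∀ u v, Γ.Adj u v → Γ.Adj (g u) (g v)) ∧ ∀ a ∈ A, g a = f a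

/-- The mono-extension property: any monomorphism from a finite induced subgraph `A`
into `Γ` extends to a monomorphism from any finite `B ⊇ A` into `Γ`. -/
def MEP {V : Type*} (Γ : SimpleGraph V) : Prop :=
  ∀ (A B : Finset V), A ⊆ B → ∀ f : V → V, Set.InjOn f A →
    (∀ u ∈ A, ∀ v ∈ A, Γ.Adj u v → Γ.Adj (f u) (f v)) →
    ∃ g : V → V, Set.InjOn g B ∧
      (∀ u ∈ B, ∀ v ∈ B, Γ.Adj u v → Γ.Adj (g u) (g v)) ∧ ∀ a ∈ A, g a = f a

/-- The antimono-extension property: any antimonomorphism (injective map preserving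
non-adjacency) from a finite induced subgraph `A` into `Γ` extends to an
antimonomorphism from any finite `B ⊇ A` into `Γ`. -/
def AMEP {V : Type*} (Γ : SimpleGraph V) : Prop :=
  ∀ (A B : Finset V), A ⊆ B → ∀ f : V → V, Set.InjOn f A →
    (∀ u ∈ A, ∀ v ∈ A, u ≠ v → ¬Γ.Adj u v → ¬Γ.Adj (f u) (f v)) →
    ∃ g : V → V, Set.InjOn g B ∧
      (∀ u ∈ B, ∀ v ∈ B, u ≠ v → ¬Γ.Adj u v → ¬Γ.Adj (g u) (g v)) ∧ ∀ a ∈ A, g a = f a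

section Aux

variable {V : Type*} {Γ : SimpleGraph V}

/-- A "good pair": a finite domain together with a map injective and
adjacency-preserving on it. -/
def GoodPair (Γ : SimpleGraph V) (D : Finset V) (f : V → V) : Prop :=
  Set.InjOn f ↑D ∧ ∀ u ∈ D, ∀ v ∈ D, Γ.Adj u v → Γ.Adj (f u) (f v)

lemma step_forward [DecidableEq V] (hM : MEP Γ) {D : Finset V} {f : V → V} (h : GoodPair Γ D f) (v : V) :
    ∃ f₁ : V → V, GoodPair Γ (insert v D) f₁ ∧ ∀ a ∈ D, f₁ a = f a := by
  classical
  obtain ⟨g, h1, h2, h3⟩ := hM D (insert v D) (Finset.subset_insert v D) f h.1 h.2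
  exact ⟨g, ⟨h1, h2⟩, h3⟩

lemma step_backward [DecidableEq V] [Nonempty V] (hA : AMEP Γ) {D : Finset V} {f : V → V}
    (h : GoodPair Γ D f) (v : V) :
    ∃ (D₂ : Finset V) (f₂ : V → V), GoodPair Γ D₂ f₂ ∧ D ⊆ D₂ ∧
      (∀ a ∈ D, f₂ a = f a) ∧ ∃ u ∈ D₂, f₂ u = v := by
  classical
  by_cases hv : v ∈ D.image f
  · obtain ⟨u, hu, huv⟩ := Finset.mem_image.mp hv
    exact ⟨D, f, h, subset_rfl, fun a _ => rfl, u, hu, huv⟩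
  · set I := D.image f with hI
    set h' := Function.invFunOn f ↑D with hh'
    have hinv : ∀ d ∈ D, h' (f d) = d := fun d hd => h.1.leftInvOn_invFunOn hd
    have hIinj : Set.InjOn h' ↑I := by
      intro x hx y hy hxy
      simp only [hI, Finset.coe_image, Set.mem_image, Finset.mem_coe] at hx hy
      obtain ⟨a, ha, rfl⟩ := hx
      obtain ⟨b, hb, rfl⟩ := hy
      rw [hinv a ha, hinv b hb] at hxy
      rw [hxy]
    have hIanti : ∀ x ∈ I, ∀ y ∈ I, x ≠ y → ¬Γ.Adj x y → ¬Γ.Adj (h' x) (h' y) := by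
      intro x hx y hy hxy hnadj hadj
      obtain ⟨a, ha, rfl⟩ := Finset.mem_image.mp hx
      obtain ⟨b, hb, rfl⟩ := Finset.mem_image.mp hy
      rw [hinv a ha, hinv b hb] at hadj
      exact hnadj (h.2 a ha b hb hadj)
    obtain ⟨k, hk1, hk2, hk3⟩ := hA I (insert v I) (Finset.subset_insert v I) h' hIinj hIanti
    have hvI : ∀ d ∈ D, v ≠ f d := by
      intro d hd hvd
      exact hv (hvd ▸ Finset.mem_image_of_mem f hd)
    have huD : k v ∉ D := by
      intro huD
      have hfu : f (k v) ∈ I := Finset.mem_image_of_mem f huD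
      have h1 : k (f (k v)) = k v := by rw [hk3 (f (k v)) hfu, hinv (k v) huD]
      have : v = f (k v) := hk1 (Finset.mem_coe.mpr (Finset.mem_insert_self v I))
        (Finset.mem_coe.mpr (Finset.mem_insert_of_mem hfu)) h1.symm
      exact hvI (k v) huD this
    have hne : ∀ a ∈ D, a ≠ k v := by
      intro a ha hh
      subst hh
      exact huD ha
    have hkey : ∀ d ∈ D, Γ.Adj (k v) d → Γ.Adj v (f d) := by
      intro d hd hadj
      by_contra hn
      have hfd : f d ∈ I := Finset.mem_image_of_mem f hd
      have := hk2 v (Finset.mem_insert_self v I) (f d) (Finset.mem_insert_of_mem hfd)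
        (hvI d hd) hn
      rw [hk3 (f d) hfd, hinv d hd] at this
      exact this hadj
    refine ⟨insert (k v) D, Function.update f (k v) v, ⟨?_, ?_⟩, Finset.subset_insert _ D,
      fun a ha => Function.update_of_ne (hne a ha) v f,
      k v, Finset.mem_insert_self _ D, Function.update_self _ v f⟩
    · intro x hx y hy hxy
      simp only [Finset.coe_insert, Set.mem_insert_iff, Finset.mem_coe] at hx hy
      rcases hx with rfl | hx <;> rcases hy with rfl | hy
      · rfl
      · rw [Function.update_self, Function.update_of_ne (hne y hy)] at hxy
        exact absurd hxy (hvI y hy)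
      · rw [Function.update_self, Function.update_of_ne (hne x hx)] at hxy
        exact absurd hxy.symm (hvI x hx)
      · rw [Function.update_of_ne (hne x hx) v f,
          Function.update_of_ne (hne y hy) v f] at hxy
        exact h.1 hx hy hxy
    · intro x hx y hy hadj
      rcases Finset.mem_insert.mp hx with rfl | hx <;> rcases Finset.mem_insert.mp hy with rfl | hy
      · exact absurd hadj (Γ.loopless.irrefl _)
      · rw [Function.update_self, Function.update_of_ne (hne y hy) v f]
        exact hkey y hy hadj
      · rw [Function.update_self, Function.update_of_ne (hne x hx) v f]
        exact (hkey x hx hadj.symm).symm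
      · rw [Function.update_of_ne (hne x hx) v f,
          Function.update_of_ne (hne y hy) v f]
        exact h.2 x hx y hy hadj

lemma step_both [DecidableEq V] [Nonempty V] (hM : MEP Γ) (hA : AMEP Γ) {D : Finset V} {f : V → V}
    (h : GoodPair Γ D f) (v : V) :
    ∃ (D' : Finset V) (f' : V → V), GoodPair Γ D' f' ∧ D ⊆ D' ∧
      (∀ a ∈ D, f' a = f a) ∧ v ∈ D' ∧ ∃ u ∈ D', f' u = v := by
  classical
  obtain ⟨f₁, h₁, hagree₁⟩ := step_forward hM h v
  obtain ⟨D₂, f₂, h₂, hsub₂, hagree₂, u, hu, huv⟩ := step_backward hA h₁ v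
  exact ⟨D₂, f₂, h₂, (Finset.subset_insert v D).trans hsub₂,
    fun a ha => (hagree₂ a (Finset.mem_insert_of_mem ha)).trans (hagree₁ a ha),
    hsub₂ (Finset.mem_insert_self v D), u, hu, huv⟩

/-- One step of the back-and-forth construction, bundled with its goodness proof. -/
noncomputable def nextPair [DecidableEq V] [Nonempty V] (hM : MEP Γ) (hA : AMEP Γ)
    (q : {p : Finset V × (V → V) // GoodPair Γ p.1 p.2}) (v : V) :
    {p : Finset V × (V → V) // GoodPair Γ p.1 p.2} :=
  ⟨⟨(step_both hM hA q.2 v).choose, (step_both hM hA q.2 v).choose_spec.choose⟩,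
    (step_both hM hA q.2 v).choose_spec.choose_spec.1⟩

lemma nextPair_spec [DecidableEq V] [Nonempty V] (hM : MEP Γ) (hA : AMEP Γ)
    (q : {p : Finset V × (V → V) // GoodPair Γ p.1 p.2}) (v : V) :
    q.1.1 ⊆ (nextPair hM hA q v).1.1 ∧
    (∀ a ∈ q.1.1, (nextPair hM hA q v).1.2 a = q.1.2 a) ∧
    v ∈ (nextPair hM hA q v).1.1 ∧
    ∃ u ∈ (nextPair hM hA q v).1.1, (nextPair hM hA q v).1.2 u = v :=
  (step_both hM hA q.2 v).choose_spec.choose_spec.2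

/-- The back-and-forth sequence of good pairs. -/
noncomputable def seqPair [DecidableEq V] [Nonempty V] (hM : MEP Γ) (hA : AMEP Γ) (e : ℕ → V)
    (p0 : {p : Finset V × (V → V) // GoodPair Γ p.1 p.2}) :
    ℕ → {p : Finset V × (V → V) // GoodPair Γ p.1 p.2} :=
  fun n => Nat.rec p0 (fun n q => nextPair hM hA q (e n)) n

end Aux

/-- A countable graph is MB-homogeneous iff it has the MEP and the AMEP. -/
theorem stmt_8 {V : Type*} [Countable V] (Γ : SimpleGraph V) :
    MBHomogeneous Γ ↔ (MEP Γ ∧ AMEP Γ) := by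
  classical
  cases isEmpty_or_nonempty V with
  | inl hE =>
    constructor
    · intro _
      constructor
      · intro A B _ f _ _
        exact ⟨id, fun x _ y _ hh => hh, fun u _ v _ hh => hh, fun a _ => isEmptyElim a⟩
      · intro A B _ f _ _
        exact ⟨id, fun x _ y _ hh => hh, fun u _ v _ _ hh => hh, fun a _ => isEmptyElim a⟩
    · intro _ A f _ _
      exact ⟨Equiv.refl V, fun u _ _ => isEmptyElim u, fun a _ => isEmptyElim a⟩
  | inr hN =>
    constructor
    · -- MB-homogeneous → MEP ∧ AMEP
      intro hMB
      constructor
      · intro A B _ f hinj hmono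
        obtain ⟨g, hg1, hg2⟩ := hMB A f hinj hmono
        exact ⟨g, g.injective.injOn, fun u _ v _ hh => hg1 u v hh, hg2⟩
      · intro A B _ f hinj hanti
        -- invert f on A; it is a monomorphism on the image
        set h' := Function.invFunOn f ↑A with hh'
        have hinv : ∀ a ∈ A, h' (f a) = a := fun a ha => hinj.leftInvOn_invFunOn ha
        have hIinj : Set.InjOn h' ↑(A.image f) := by
          intro x hx y hy hxy
          simp only [Finset.coe_image, Set.mem_image, Finset.mem_coe] at hx hy
          obtain ⟨a, ha, rfl⟩ := hx
          obtain ⟨b, hb, rfl⟩ := hy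
          rw [hinv a ha, hinv b hb] at hxy
          rw [hxy]
        have hImono : ∀ x ∈ A.image f, ∀ y ∈ A.image f, Γ.Adj x y → Γ.Adj (h' x) (h' y) := by
          intro x hx y hy hadj
          obtain ⟨a, ha, rfl⟩ := Finset.mem_image.mp hx
          obtain ⟨b, hb, rfl⟩ := Finset.mem_image.mp hy
          rw [hinv a ha, hinv b hb]
          by_contra hn
          have hab : a ≠ b := fun hh => hadj.ne (hh ▸ rfl)
          exact hanti a ha b hb hab hn hadj
        obtain ⟨g, hg1, hg2⟩ := hMB (A.image f) h' hIinj hImono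
        refine ⟨⇑g.symm, g.symm.injective.injOn, ?_, ?_⟩
        · intro u _ v _ hne hnadj hadj
          have := hg1 (g.symm u) (g.symm v) hadj
          simp only [Equiv.apply_symm_apply] at this
          exact hnadj this
        · intro a ha
          have h1 : g (f a) = a := by
            rw [hg2 (f a) (Finset.mem_image_of_mem f ha), hinv a ha]
          exact (Equiv.symm_apply_eq g).mpr h1.symm
    · -- MEP ∧ AMEP → MB-homogeneous
      rintro ⟨hM, hA⟩ A f hinj hmono
      letI := Classical.decEq V
      obtain ⟨e, he⟩ := exists_surjective_nat V
      set S := seqPair hM hA e ⟨(A, f), hinj, hmono⟩ with hS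
      have hspec : ∀ n, (S n).1.1 ⊆ (S (n + 1)).1.1 ∧
          (∀ a ∈ (S n).1.1, (S (n + 1)).1.2 a = (S n).1.2 a) ∧
          e n ∈ (S (n + 1)).1.1 ∧
          ∃ u ∈ (S (n + 1)).1.1, (S (n + 1)).1.2 u = e n :=
        fun n => nextPair_spec hM hA (S n) (e n)
      have hsub : ∀ m n, m ≤ n → (S m).1.1 ⊆ (S n).1.1 := by
        intro m n hmn
        induction n, hmn using Nat.le_induction with
        | base => exact subset_rfl
        | succ n hmn ih => exact ih.trans (hspec n).1
      have hagree : ∀ m n, m ≤ n → ∀ a ∈ (S m).1.1, (S n).1.2 a = (S m).1.2 a := by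
        intro m n hmn
        induction n, hmn using Nat.le_induction with
        | base => exact fun a _ => rfl
        | succ n hmn ih =>
          intro a ha
          rw [(hspec n).2.1 a (hsub m n hmn ha)]
          exact ih a ha
      set idx : V → ℕ := fun x => (he x).choose with hidxdef
      have hidx : ∀ x, e (idx x) = x := fun x => (he x).choose_spec
      have hxmem : ∀ x, x ∈ (S (idx x + 1)).1.1 := by
        intro x
        have := (hspec (idx x)).2.2.1
        rwa [hidx x] at this
      set g : V → V := fun x => (S (idx x + 1)).1.2 x with hg
      have hgeq : ∀ n x, x ∈ (S n).1.1 → g x = (S n).1.2 x := by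
        intro n x hx
        have h1 : (S (max n (idx x + 1))).1.2 x = (S n).1.2 x :=
          hagree n _ (le_max_left _ _) x hx
        have h2 : (S (max n (idx x + 1))).1.2 x = (S (idx x + 1)).1.2 x :=
          hagree _ _ (le_max_right _ _) x (hxmem x)
        exact h2.symm.trans h1
      have hginj : Function.Injective g := by
        intro x y hxy
        set N := max (idx x + 1) (idx y + 1) with hN
        have hx : x ∈ (S N).1.1 := hsub _ N (le_max_left _ _) (hxmem x)
        have hy : y ∈ (S N).1.1 := hsub _ N (le_max_right _ _) (hxmem y)
        have hxy' : (S N).1.2 x = (S N).1.2 y := by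
          rw [← hgeq N x hx, ← hgeq N y hy]; exact hxy
        exact (S N).2.1 (Finset.mem_coe.mpr hx) (Finset.mem_coe.mpr hy) hxy'
      have hgsurj : Function.Surjective g := by
        intro v
        have := (hspec (idx v)).2.2.2
        rw [hidx v] at this
        obtain ⟨u, hu, huv⟩ := this
        exact ⟨u, (hgeq (idx v + 1) u hu).trans huv⟩
      have hgmono : ∀ u v, Γ.Adj u v → Γ.Adj (g u) (g v) := by
        intro u v hadj
        set N := max (idx u + 1) (idx v + 1) with hN
        have hu : u ∈ (S N).1.1 := hsub _ N (le_max_left _ _) (hxmem u)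
        have hv : v ∈ (S N).1.1 := hsub _ N (le_max_right _ _) (hxmem v)
        rw [hgeq N u hu, hgeq N v hv]
        exact (S N).2.2 u hu v hv hadj
      have hgext : ∀ a ∈ A, g a = f a := by
        intro a ha
        have h0 : a ∈ (S 0).1.1 := ha
        exact hgeq 0 a h0
      exact ⟨Equiv.ofBijective g ⟨hginj, hgsurj⟩, hgmono, hgext⟩
end

section
/- Let P : ℕ → Bool be a sequence, and let Γ(P) be the graph on ℕ with i ~ j (for i ≠ j) iff P(max(i,j)) = 0. If P takes the value 0 infinitely often and the value 1 infinitely often, then Γ(P) has property (△) and property (∴), hence is MB-homogeneous. -/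
/-- The graph on `ℕ` determined by a binary sequence `P`:
`i ~ j` (for `i ≠ j`) iff `P (max i j) = 0` (encoded as `false`). -/
def seqGraph (P : ℕ → Bool) : SimpleGraph ℕ where
  Adj i j := i ≠ j ∧ P (max i j) = false
  symm := by
    constructor
    intro i j h
    exact ⟨h.1.symm, by rw [max_comm]; exact h.2⟩
  loopless := by
    constructor
    intro i h
    exact h.1 rfl

/-- Partial injective edge-preserving map with domain `D`. -/
def GoodMap (P : ℕ → Bool) (D : Finset ℕ) (g : ℕ → ℕ) : Prop :=
  Set.InjOn g ↑D ∧ ∀ u ∈ D, ∀ v ∈ D, (seqGraph P).Adj u v → (seqGraph P).Adj (g u) (g v)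

lemma exists_nbr (P : ℕ → Bool) (h0 : {i | P i = false}.Infinite) (U F : Finset ℕ) :
    ∃ w, w ∉ F ∧ ∀ x ∈ U, (seqGraph P).Adj w x := by
  obtain ⟨w, hw, hgt⟩ := h0.exists_gt (max (F.sup id) (U.sup id))
  refine ⟨w, fun hF => ?_, fun x hx => ?_⟩
  · exact absurd hgt (not_lt.2 ((Finset.le_sup (f := id) hF).trans (le_max_left _ _)))
  · have hxw : x < w := lt_of_le_of_lt ((Finset.le_sup (f := id) hx).trans (le_max_right _ _)) hgt
    exact ⟨hxw.ne', by rw [max_eq_left hxw.le]; exact hw⟩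

lemma exists_nonnbr (P : ℕ → Bool) (h1 : {i | P i = true}.Infinite) (U F : Finset ℕ) :
    ∃ v, v ∉ F ∧ ∀ x ∈ U, ¬ (seqGraph P).Adj v x := by
  obtain ⟨v, hv, hgt⟩ := h1.exists_gt (max (F.sup id) (U.sup id))
  refine ⟨v, fun hF => ?_, fun x hx hadj => ?_⟩
  · exact absurd hgt (not_lt.2 ((Finset.le_sup (f := id) hF).trans (le_max_left _ _)))
  · have hxv : x < v := lt_of_le_of_lt ((Finset.le_sup (f := id) hx).trans (le_max_right _ _)) hgt
    have := hadj.2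
    rw [max_eq_left hxv.le, hv] at this
    exact Bool.noConfusion this

lemma ext_dom (P : ℕ → Bool) (h0 : {i | P i = false}.Infinite)
    (D : Finset ℕ) (g : ℕ → ℕ) (hg : GoodMap P D g) (v : ℕ) (hv : v ∉ D) :
    ∃ g', GoodMap P (insert v D) g' ∧ ∀ x ∈ D, g' x = g x := by
  obtain ⟨w, hwF, hwadj⟩ := exists_nbr P h0 (D.image g) (D.image g)
  have hupd : ∀ x ∈ D, Function.update g v w x = g x := by
    intro x hx
    exact Function.update_of_ne (by rintro rfl; exact hv hx) _ _
  refine ⟨Function.update g v w, ⟨?_, ?_⟩, hupd⟩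
  · intro x hx y hy hxy
    rw [Finset.coe_insert, Set.mem_insert_iff] at hx hy
    rcases hx with rfl | hx <;> rcases hy with rfl | hy
    · rfl
    · rw [Function.update_self, hupd y hy] at hxy
      exact absurd (Finset.mem_image_of_mem g hy) (hxy ▸ hwF)
    · rw [Function.update_self, hupd x hx] at hxy
      exact absurd (Finset.mem_image_of_mem g hx) (hxy.symm ▸ hwF)
    · rw [hupd x hx, hupd y hy] at hxy
      exact hg.1 hx hy hxy
  · intro u hu u' hu' hadj
    rw [Finset.mem_insert] at hu hu'
    rcases hu with rfl | hu <;> rcases hu' with rfl | hu'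
    · exact absurd rfl hadj.1
    · rw [Function.update_self, hupd u' hu']
      exact hwadj _ (Finset.mem_image_of_mem g hu')
    · rw [Function.update_self, hupd u hu]
      exact ((seqGraph P).adj_symm (hwadj _ (Finset.mem_image_of_mem g hu)))
    · rw [hupd u hu, hupd u' hu']
      exact hg.2 u hu u' hu' hadj

lemma ext_cod (P : ℕ → Bool) (h1 : {i | P i = true}.Infinite)
    (D : Finset ℕ) (g : ℕ → ℕ) (hg : GoodMap P D g) (w : ℕ) (hw : w ∉ D.image g) :
    ∃ v g', v ∉ D ∧ GoodMap P (insert v D) g' ∧ (∀ x ∈ D, g' x = g x) ∧ g' v = w := by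
  obtain ⟨v, hvD, hvnon⟩ := exists_nonnbr P h1 D D
  have hupd : ∀ x ∈ D, Function.update g v w x = g x := by
    intro x hx
    exact Function.update_of_ne (by rintro rfl; exact hvD hx) _ _
  refine ⟨v, Function.update g v w, hvD, ⟨?_, ?_⟩, hupd, Function.update_self _ _ _⟩
  · intro x hx y hy hxy
    rw [Finset.coe_insert, Set.mem_insert_iff] at hx hy
    rcases hx with rfl | hx <;> rcases hy with rfl | hy
    · rfl
    · rw [Function.update_self, hupd y hy] at hxy
      exact absurd (Finset.mem_image_of_mem g hy) (hxy ▸ hw)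
    · rw [Function.update_self, hupd x hx] at hxy
      exact absurd (Finset.mem_image_of_mem g hx) (hxy.symm ▸ hw)
    · rw [hupd x hx, hupd y hy] at hxy
      exact hg.1 hx hy hxy
  · intro u hu u' hu' hadj
    rw [Finset.mem_insert] at hu hu'
    rcases hu with rfl | hu <;> rcases hu' with rfl | hu'
    · exact absurd rfl hadj.1
    · exact absurd hadj (hvnon u' hu')
    · exact absurd ((seqGraph P).adj_symm hadj) (hvnon u hu)
    · rw [hupd u hu, hupd u' hu']
      exact hg.2 u hu u' hu' hadj

lemma step (P : ℕ → Bool) (h0 : {i | P i = false}.Infinite) (h1 : {i | P i = true}.Infinite)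
    (D : Finset ℕ) (g : ℕ → ℕ) (hg : GoodMap P D g) (n : ℕ) :
    ∃ q : Finset ℕ × (ℕ → ℕ), GoodMap P q.1 q.2 ∧ D ⊆ q.1 ∧ (∀ x ∈ D, q.2 x = g x) ∧
      n ∈ q.1 ∧ ∃ x ∈ q.1, q.2 x = n := by
  -- phase 1: put n in the domain
  obtain ⟨D1, g1, hg1, hsub1, hagr1, hn1⟩ :
      ∃ D1 g1, GoodMap P D1 g1 ∧ D ⊆ D1 ∧ (∀ x ∈ D, g1 x = g x) ∧ n ∈ D1 := by
    by_cases hn : n ∈ D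
    · exact ⟨D, g, hg, le_refl _, fun _ _ => rfl, hn⟩
    · obtain ⟨g', hg', hagr⟩ := ext_dom P h0 D g hg n hn
      exact ⟨insert n D, g', hg', Finset.subset_insert _ _, hagr, Finset.mem_insert_self _ _⟩
  -- phase 2: put n in the image
  by_cases hn2 : n ∈ D1.image g1
  · obtain ⟨x, hx, hxn⟩ := Finset.mem_image.1 hn2
    exact ⟨(D1, g1), hg1, hsub1, hagr1, hn1, x, hx, hxn⟩
  · obtain ⟨v, g2, hvD1, hg2, hagr2, hg2v⟩ := ext_cod P h1 D1 g1 hg1 n hn2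
    refine ⟨(insert v D1, g2), hg2, hsub1.trans (Finset.subset_insert _ _),
      fun x hx => (hagr2 x (hsub1 hx)).trans (hagr1 x hx),
      Finset.mem_insert_of_mem hn1, v, Finset.mem_insert_self _ _, hg2v⟩

noncomputable def chain (P : ℕ → Bool) (h0 : {i | P i = false}.Infinite)
    (h1 : {i | P i = true}.Infinite) (A : Finset ℕ) (f : ℕ → ℕ) (hGood : GoodMap P A f) :
    ℕ → {p : Finset ℕ × (ℕ → ℕ) // GoodMap P p.1 p.2}
  | 0 => ⟨(A, f), hGood⟩
  | n + 1 =>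
    ⟨(step P h0 h1 (chain P h0 h1 A f hGood n).1.1 (chain P h0 h1 A f hGood n).1.2
        (chain P h0 h1 A f hGood n).2 n).choose,
     (step P h0 h1 (chain P h0 h1 A f hGood n).1.1 (chain P h0 h1 A f hGood n).1.2
        (chain P h0 h1 A f hGood n).2 n).choose_spec.1⟩

lemma chain_spec (P : ℕ → Bool) (h0 : {i | P i = false}.Infinite)
    (h1 : {i | P i = true}.Infinite) (A : Finset ℕ) (f : ℕ → ℕ) (hGood : GoodMap P A f) (n : ℕ) :
    (chain P h0 h1 A f hGood n).1.1 ⊆ (chain P h0 h1 A f hGood (n + 1)).1.1 ∧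
    (∀ x ∈ (chain P h0 h1 A f hGood n).1.1,
      (chain P h0 h1 A f hGood (n + 1)).1.2 x = (chain P h0 h1 A f hGood n).1.2 x) ∧
    n ∈ (chain P h0 h1 A f hGood (n + 1)).1.1 ∧
    ∃ x ∈ (chain P h0 h1 A f hGood (n + 1)).1.1, (chain P h0 h1 A f hGood (n + 1)).1.2 x = n := by
  have := (step P h0 h1 (chain P h0 h1 A f hGood n).1.1 (chain P h0 h1 A f hGood n).1.2
      (chain P h0 h1 A f hGood n).2 n).choose_spec
  exact ⟨this.2.1, this.2.2.1, this.2.2.2.1, this.2.2.2.2⟩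

lemma chain_mono (P : ℕ → Bool) (h0 : {i | P i = false}.Infinite)
    (h1 : {i | P i = true}.Infinite) (A : Finset ℕ) (f : ℕ → ℕ) (hGood : GoodMap P A f)
    {m n : ℕ} (h : m ≤ n) :
    (chain P h0 h1 A f hGood m).1.1 ⊆ (chain P h0 h1 A f hGood n).1.1 := by
  induction n, h using Nat.le_induction with
  | base => exact subset_rfl
  | succ n hmn ih => exact ih.trans (chain_spec P h0 h1 A f hGood n).1

lemma chain_compat (P : ℕ → Bool) (h0 : {i | P i = false}.Infinite)
    (h1 : {i | P i = true}.Infinite) (A : Finset ℕ) (f : ℕ → ℕ) (hGood : GoodMap P A f)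
    {m n : ℕ} (h : m ≤ n) :
    ∀ x ∈ (chain P h0 h1 A f hGood m).1.1,
      (chain P h0 h1 A f hGood n).1.2 x = (chain P h0 h1 A f hGood m).1.2 x := by
  induction n, h using Nat.le_induction with
  | base => exact fun _ _ => rfl
  | succ n hmn ih =>
    intro x hx
    rw [(chain_spec P h0 h1 A f hGood n).2.1 x (chain_mono P h0 h1 A f hGood hmn hx), ih x hx]

/-- If the binary sequence `P` has infinitely many `0`'s and infinitely many `1`'s,
then `Γ(P)` has properties (△) and (∴), and hence is MB-homogeneous. -/
theorem stmt_16 (P : ℕ → Bool)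
    (h0 : {i | P i = false}.Infinite) (h1 : {i | P i = true}.Infinite) :
    (∀ U : Finset ℕ, ∃ u : ℕ, ∀ x ∈ U, (seqGraph P).Adj u x) ∧
    (∀ U : Finset ℕ, ∃ v : ℕ, ∀ x ∈ U, ¬(seqGraph P).Adj v x) ∧
    MBHomogeneous (seqGraph P) := by
  refine ⟨fun U => ?_, fun U => ?_, ?_⟩
  · obtain ⟨w, _, hw⟩ := exists_nbr P h0 U ∅
    exact ⟨w, hw⟩
  · obtain ⟨v, _, hv⟩ := exists_nonnbr P h1 U ∅
    exact ⟨v, hv⟩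
  · intro A f hinj hhom
    have hGood : GoodMap P A f := ⟨hinj, hhom⟩
    set C := chain P h0 h1 A f hGood with hC
    set G : ℕ → ℕ := fun x => (C (x + 1)).1.2 x with hG
    have hmemx : ∀ x : ℕ, x ∈ (C (x + 1)).1.1 := fun x => (chain_spec P h0 h1 A f hGood x).2.2.1
    have hGeq : ∀ m x, x ∈ (C m).1.1 → G x = (C m).1.2 x := by
      intro m x hx
      have h1' := chain_compat P h0 h1 A f hGood (le_max_left m (x + 1)) x hx
      have h2' := chain_compat P h0 h1 A f hGood (le_max_right m (x + 1)) x (hmemx x)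
      exact h2'.symm.trans h1'
    have hGinj : Function.Injective G := by
      intro x y hxy
      have hx : x ∈ (C (max (x + 1) (y + 1))).1.1 :=
        chain_mono P h0 h1 A f hGood (le_max_left _ _) (hmemx x)
      have hy : y ∈ (C (max (x + 1) (y + 1))).1.1 :=
        chain_mono P h0 h1 A f hGood (le_max_right _ _) (hmemx y)
      refine (C (max (x + 1) (y + 1))).2.1 hx hy ?_
      rw [← hGeq _ _ hx, ← hGeq _ _ hy]; exact hxy
    have hGsurj : Function.Surjective G := by
      intro n
      obtain ⟨x, hx, hxn⟩ := (chain_spec P h0 h1 A f hGood n).2.2.2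
      exact ⟨x, (hGeq (n + 1) x hx).trans hxn⟩
    refine ⟨Equiv.ofBijective G ⟨hGinj, hGsurj⟩, fun u v hadj => ?_, fun a ha => ?_⟩
    · have hu : u ∈ (C (max (u + 1) (v + 1))).1.1 :=
        chain_mono P h0 h1 A f hGood (le_max_left _ _) (hmemx u)
      have hv : v ∈ (C (max (u + 1) (v + 1))).1.1 :=
        chain_mono P h0 h1 A f hGood (le_max_right _ _) (hmemx v)
      have := (C (max (u + 1) (v + 1))).2.2 u hu v hv hadj
      show (seqGraph P).Adj (G u) (G v)
      rw [hGeq _ _ hu, hGeq _ _ hv]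
      exact this
    · show G a = f a
      exact hGeq 0 a ha
end
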